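/- Let G be a simple graph on a finite vertex set X and let S ⊆ X be a nonempty independent set of G. Define the matrix B indexed by X × X by B_{x,x'} = 1/|S| if x ∈ S and x' ∈ S, and B_{x,x'} = 0 otherwise. Then B is Hermitian positive semidefinite, B_{x,x'} = 0 whenever x and x' are adjacent in G, trace(B) = 1, and trace(B·J) = |S|, where J is the all-ones matrix. (In particular the independence number α(G) satisfies α(G) ≤ ϑ(G).) -/

import Mathlib

open Matrix
open scoped BigOperators ComplexOrder

/-- For a nonempty independent set `S` of a graph `G`, the matrix with entries
`1/|S|` on `S × S` and `0` elsewhere is a feasible solution for the Lovász theta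
function with `trace (B * J) = |S|`; in particular `α(G) ≤ ϑ(G)`. -/
theorem theta_ge_indep_set
    {X : Type} [Fintype X] [DecidableEq X] (G : SimpleGraph X)
    (S : Finset X) (hS : S.Nonempty)
    (hindep : ∀ x ∈ S, ∀ x' ∈ S, ¬ G.Adj x x')
    (B : Matrix X X ℂ)
    (hB : B = Matrix.of (fun x x' => if x ∈ S ∧ x' ∈ S then ((S.card : ℂ))⁻¹ else 0)) :
    B.PosSemidef ∧ (∀ x x', G.Adj x x' → B x x' = 0) ∧
      B.trace = 1 ∧ (B * Matrix.of (fun _ _ => (1 : ℂ))).trace = (S.card : ℂ) := by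
  have hcard0 : S.card ≠ 0 := Finset.card_ne_zero_of_mem hS.choose_spec
  have hcard : (S.card : ℂ) ≠ 0 := Nat.cast_ne_zero.mpr hcard0
  refine ⟨Matrix.posSemidef_iff_dotProduct_mulVec.mpr ⟨?_, ?_⟩, ?_, ?_, ?_⟩
  · -- Hermitian
    rw [hB]
    ext x x'
    simp only [conjTranspose_apply, of_apply]
    by_cases h1 : x ∈ S <;> by_cases h2 : x' ∈ S <;> simp [h1, h2]
  · -- quadratic form nonneg
    intro f
    have h1 : B *ᵥ f = fun i => if i ∈ S then ((S.card : ℂ))⁻¹ * ∑ j ∈ S, f j else 0 := by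
      ext i
      simp only [hB, mulVec, dotProduct, of_apply]
      by_cases hi : i ∈ S
      · simp [hi, ite_mul, Finset.sum_ite_mem, Finset.univ_inter, Finset.mul_sum]
      · simp [hi]
    have h2 : star f ⬝ᵥ B *ᵥ f =
        ((S.card : ℂ))⁻¹ * ((starRingEnd ℂ) (∑ j ∈ S, f j) * ∑ j ∈ S, f j) := by
      rw [h1]
      simp only [dotProduct, Pi.star_apply, mul_ite, mul_zero, Finset.sum_ite_mem,
        Finset.univ_inter]
      rw [← Finset.sum_mul, map_sum]
      simp only [Complex.star_def]
      ring
    rw [h2, ← Complex.normSq_eq_conj_mul_self]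
    have : ((S.card : ℂ))⁻¹ = (((S.card : ℝ))⁻¹ : ℂ) := by push_cast; ring
    rw [this, ← Complex.ofReal_inv, ← Complex.ofReal_mul]
    rw [Complex.zero_le_real]
    exact mul_nonneg (by positivity) (Complex.normSq_nonneg _)
  · -- no edge support
    intro x x' hadj
    rw [hB]
    simp only [of_apply]
    rw [if_neg]
    rintro ⟨h1, h2⟩
    exact hindep x h1 x' h2 hadj
  · -- trace = 1
    rw [hB, Matrix.trace]
    simp only [diag_apply, of_apply, and_self, Finset.sum_ite_mem, Finset.univ_inter,
      Finset.sum_const, nsmul_eq_mul]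
    exact mul_inv_cancel₀ hcard
  · -- trace (B * J)
    rw [hB, Matrix.trace]
    simp only [diag_apply, mul_apply, of_apply, mul_one]
    have h : ∀ i : X, (∑ j : X, if i ∈ S ∧ j ∈ S then ((S.card : ℂ))⁻¹ else 0)
        = if i ∈ S then 1 else 0 := by
      intro i
      by_cases hi : i ∈ S
      · simp [hi, Finset.sum_ite_mem, Finset.univ_inter, Finset.sum_const, nsmul_eq_mul,
          mul_inv_cancel₀ hcard]
      · simp [hi]
    rw [Finset.sum_congr rfl (fun i _ => h i)]
    simp [Finset.sum_ite_mem, Finset.univ_inter]
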